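/- Let N be a binary normal network on X with reticulated cherry {a,b} (reticulation leaf b), and let g_b be the grandparent of b not equal to the parent of a. Then for all c in V_{g_b} and x in X - (V_{g_b} ∪ {a,b}), the rooted triple cx|a is displayed by N if and only if the rooted triple bx|a is displayed by N. -/

import Mathlib

/-- A (candidate) rooted phylogenetic network structure: a directed graph on a
vertex type `V` with a distinguished root and a labelling of (intended) leaves
by elements of `X`.  The combinatorial axioms are imposed by predicates below. -/
structure Network (X : Type) where
  V : Type
  arc : V → V → Prop
  root : V
  leaf : X → V

namespace Network

variable {X : Type} (N : Network X)

def parents (v : N.V) : Set N.V := {u | N.arc u v}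

def children (u : N.V) : Set N.V := {v | N.arc u v}

/-- in-degree 1, out-degree 2 -/
def IsTreeVertex (v : N.V) : Prop := (N.parents v).ncard = 1 ∧ (N.children v).ncard = 2

/-- in-degree 2, out-degree 1 -/
def IsRetic (v : N.V) : Prop := (N.parents v).ncard = 2 ∧ (N.children v).ncard = 1

/-- in-degree 1, out-degree 0 -/
def IsLeafVertex (v : N.V) : Prop := (N.parents v).ncard = 1 ∧ (N.children v).ncard = 0

def Acyclic : Prop := ∀ v : N.V, ¬ Relation.TransGen N.arc v v

/-- A well-formed binary phylogenetic network (non-degenerate case): a finite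
acyclic digraph with a root of in-degree 0 and out-degree 2, leaves of
in-degree 1 and out-degree 0 bijectively labelled by `X`, and all remaining
vertices tree vertices or reticulations. -/
def Wf : Prop :=
  Finite N.V ∧ N.Acyclic ∧
  (N.parents N.root).ncard = 0 ∧ (N.children N.root).ncard = 2 ∧
  Function.Injective N.leaf ∧
  (∀ x : X, N.IsLeafVertex (N.leaf x)) ∧
  (∀ v : N.V, v = N.root ∨ (∃ x, N.leaf x = v) ∨ N.IsTreeVertex v ∨ N.IsRetic v)

/-- The degenerate network on a single leaf: one vertex, no arcs. -/
def Degenerate : Prop :=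
  (∀ v : N.V, v = N.root) ∧ (∀ u v : N.V, ¬ N.arc u v) ∧
  (∃! _x : X, True) ∧ (∀ x : X, N.leaf x = N.root)

def IsBinaryPhylo : Prop := N.Wf ∨ N.Degenerate

/-- `l` is a directed path (a list of successively adjacent vertices) from `u` to `v`. -/
def IsPathFromTo (l : List N.V) (u v : N.V) : Prop :=
  l.Chain' N.arc ∧ l.head? = some u ∧ l.getLast? = some v

/-- `v` is a descendant of `u` (equivalently, `u` is an ancestor of `v`). -/
def Desc (u v : N.V) : Prop := Relation.ReflTransGen N.arc u v

/-- The visibility set of `u`: those leaf labels `x` such that every directed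
path from the root to the leaf labelled `x` traverses `u`. -/
def visSet (u : N.V) : Set X :=
  {x | ∀ l : List N.V, N.IsPathFromTo l N.root (N.leaf x) → u ∈ l}

/-- The cluster set of `u`: leaf labels of leaves that are descendants of `u`. -/
def cluster (u : N.V) : Set X := {x | N.Desc u (N.leaf x)}

/-- A tree path from `u` to `t`: a directed path whose vertices other than the
endpoints are tree vertices. -/
def IsTreePath (l : List N.V) (u t : N.V) : Prop :=
  N.IsPathFromTo l u t ∧ ∀ v ∈ l, v ≠ u → v ≠ t → N.IsTreeVertex v

/-- Tree-child: every vertex with a child has a child that is a tree vertex or a leaf. -/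
def TreeChild : Prop :=
  ∀ v : N.V, (∃ c, N.arc v c) → ∃ c, N.arc v c ∧ (N.IsTreeVertex c ∨ N.IsLeafVertex c)

/-- Some reticulation arc `(u,v)` is a shortcut: there is a directed path from
`u` to `v` avoiding the arc `(u,v)`. -/
def HasShortcut : Prop :=
  ∃ u v, N.arc u v ∧ N.IsRetic v ∧ ∃ w, N.arc u w ∧ w ≠ v ∧ N.Desc w v

/-- Normal: tree-child with no shortcuts. -/
def IsNormal : Prop := N.TreeChild ∧ ¬ N.HasShortcut

def SiblingRetics (u v : N.V) : Prop :=
  u ≠ v ∧ N.IsRetic u ∧ N.IsRetic v ∧ ∃ p, N.arc p u ∧ N.arc p v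

def StackRetics (u v : N.V) : Prop :=
  N.IsRetic u ∧ N.IsRetic v ∧ N.arc u v

/-- `u` and `v` are near-sibling reticulations: some tree vertex `t` has as its
two children `v` and a tree vertex `s` that is a parent of `u`. -/
def NearSiblingRetics (u v : N.V) : Prop :=
  u ≠ v ∧ N.IsRetic u ∧ N.IsRetic v ∧
  ∃ t s, N.IsTreeVertex t ∧ N.IsTreeVertex s ∧ N.arc t s ∧ N.arc t v ∧ N.arc s u

/-- `u` and `v` are near-stack reticulations: the child of `u` is a tree vertex
that is a parent of `v`. -/
def NearStackRetics (u v : N.V) : Prop :=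
  N.IsRetic u ∧ N.IsRetic v ∧ ∃ s, N.arc u s ∧ N.IsTreeVertex s ∧ N.arc s v

def NoNearRetics : Prop :=
  (∀ u v, ¬ N.NearSiblingRetics u v) ∧ (∀ u v, ¬ N.NearStackRetics u v)

/-- `{a,b}` is a cherry: the leaves labelled `a` and `b` share a parent. -/
def Cherry (a b : X) : Prop :=
  a ≠ b ∧ ∃ p, N.arc p (N.leaf a) ∧ N.arc p (N.leaf b)

/-- `{a,b}` is a reticulated cherry with reticulation leaf `b`. -/
def ReticCherry (a b : X) : Prop :=
  a ≠ b ∧ ∃ pa pb, N.arc pa (N.leaf a) ∧ N.arc pb (N.leaf b) ∧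
    N.IsRetic pb ∧ N.arc pa pb

/-- `N` displays the rooted triple `xy|z`: there is a subdigraph of `N` that
is a subdivision of the rooted triple tree with `z` adjacent to the root,
i.e. vertices `p` (the root image) and `q` (the image of the parent of `x,y`)
together with internally disjoint directed paths as below. -/
def Displays (x y z : X) : Prop :=
  x ≠ y ∧ x ≠ z ∧ y ≠ z ∧
  ∃ (p q : N.V) (l0 lx ly lz : List N.V),
    p ≠ q ∧
    N.IsPathFromTo l0 p q ∧
    N.IsPathFromTo lx q (N.leaf x) ∧
    N.IsPathFromTo ly q (N.leaf y) ∧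
    N.IsPathFromTo lz p (N.leaf z) ∧
    (∀ v ∈ lx, v ∈ ly → v = q) ∧
    (∀ v ∈ l0, v ∈ lx ∨ v ∈ ly → v = q) ∧
    (∀ v ∈ lz, v ∈ l0 ∨ v ∈ lx ∨ v ∈ ly → v = p)

/-- `R(N)`: the set of rooted triples displayed by `N`, encoded as ordered
triples `(x, y, z)` standing for `xy|z`. -/
def RDisp : Set (X × X × X) := {t | N.Displays t.1 t.2.1 t.2.2}

/-- Isomorphism of networks on the same leaf set: a digraph isomorphism fixing
each leaf label. -/
def Isomorphic (N1 N2 : Network X) : Prop :=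
  ∃ φ : N1.V ≃ N2.V,
    (∀ u v, N1.arc u v ↔ N2.arc (φ u) (φ v)) ∧ (∀ x, φ (N1.leaf x) = N2.leaf x)

/-- A candidate set for `b` (relative to `a`): a non-empty subset
`W ⊆ X - {a,b}` satisfying conditions (W1)–(W5). -/
def CandidateSet (a b : X) (W : Set X) : Prop :=
  W.Nonempty ∧ a ∉ W ∧ b ∉ W ∧
  -- (W1)
  (∀ c ∈ W, ∀ x : X, x ∉ W → x ≠ b →
    N.Displays b c x ∧ ¬ N.Displays a c b) ∧
  -- (W2)
  (∀ c ∈ W, ∀ c' ∈ W, c ≠ c' → ¬ N.Displays b c c') ∧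
  -- (W3)
  (∀ c ∈ W, ∀ x : X, x ∉ W → x ≠ a → x ≠ b →
    (N.Displays c x a ↔ N.Displays b x a)) ∧
  -- (W4)
  (∀ x y : X, x ∉ W → x ≠ a → x ≠ b → y ∉ W → y ≠ a → y ≠ b →
    N.Displays b x y → ¬ N.Displays a x y → ∀ c ∈ W, N.Displays c x y) ∧
  -- (W5)
  (∀ c ∈ W, (∀ x : X, x ∉ W → x ≠ a → x ≠ b → N.Displays a c x) →
    ∀ x : X, x ∉ W → x ≠ a → x ≠ b → ¬ N.Displays a x c ∧ ¬ N.Displays a x b)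

end Network


namespace Network

open Relation List

section ListLemmas

variable {α : Type*} {R : α → α → Prop}

lemma chain'_head_rtg : ∀ {l : List α} {u v : α}, l.Chain' R → l.head? = some u →
    v ∈ l → Relation.ReflTransGen R u v
  | a :: t, u, v, hc, hh, hv => by
    obtain rfl : a = u := by simpa using hh
    rcases List.mem_cons.mp hv with rfl | hv
    · exact .refl
    · match t, hv with
      | b :: t', hv =>
        have hc' := List.isChain_cons_cons.mp hc
        exact .head hc'.1 (chain'_head_rtg hc'.2 rfl hv)

lemma chain'_last_rtg : ∀ {l : List α} {v w : α}, l.Chain' R → l.getLast? = some w →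
    v ∈ l → Relation.ReflTransGen R v w
  | a :: t, v, w, hc, hl, hv => by
    match t with
    | [] =>
      obtain rfl : a = w := by simpa using hl
      obtain rfl : v = a := by simpa using hv
      exact .refl
    | b :: t' =>
      have hc' := List.isChain_cons_cons.mp hc
      have hl' : (b :: t').getLast? = some w := hl
      rcases List.mem_cons.mp hv with rfl | hv
      · exact .head hc'.1 (chain'_last_rtg hc'.2 hl' List.mem_cons_self)
      · exact chain'_last_rtg hc'.2 hl' hv

lemma exists_last_sat {Q : α → Prop} :
    ∀ {P : List α}, (∃ z ∈ P, Q z) → ∃ s v t, P = s ++ v :: t ∧ Q v ∧ ∀ z ∈ t, ¬ Q z := by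
  classical
  intro P
  induction P with
  | nil => rintro ⟨z, hz, -⟩; simp at hz
  | cons a P' ih =>
    intro h
    by_cases hP' : ∃ z ∈ P', Q z
    · obtain ⟨s, v, t, rfl, hv, ht⟩ := ih hP'
      exact ⟨a :: s, v, t, rfl, hv, ht⟩
    · have hQa : Q a := by
        obtain ⟨z, hz, hQz⟩ := h
        rcases List.mem_cons.mp hz with rfl | hz
        · exact hQz
        · exact absurd ⟨z, hz, hQz⟩ hP'
      exact ⟨[], a, P', rfl, hQa, fun z hz hQ => hP' ⟨z, hz, hQ⟩⟩

end ListLemmas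

variable {X : Type} {N : Network X}

lemma path_ne_nil {l : List N.V} {u v : N.V} (h : N.IsPathFromTo l u v) : l ≠ [] := by
  intro hl; rw [hl] at h; simpa using h.2.1

lemma path_head_mem {l : List N.V} {u v : N.V} (h : N.IsPathFromTo l u v) : u ∈ l :=
  List.mem_of_mem_head? (by rw [h.2.1]; rfl)

lemma path_last_mem {l : List N.V} {u v : N.V} (h : N.IsPathFromTo l u v) : v ∈ l :=
  List.mem_of_mem_getLast? (by rw [h.2.2]; rfl)

lemma path_desc_head {l : List N.V} {u w v : N.V} (h : N.IsPathFromTo l u w) (hv : v ∈ l) :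
    N.Desc u v := chain'_head_rtg h.1 h.2.1 hv

lemma path_desc_last {l : List N.V} {u w v : N.V} (h : N.IsPathFromTo l u w) (hv : v ∈ l) :
    N.Desc v w := chain'_last_rtg h.1 h.2.2 hv

lemma path_desc {l : List N.V} {u w : N.V} (h : N.IsPathFromTo l u w) : N.Desc u w :=
  path_desc_last h (path_head_mem h)

lemma path_of_desc {u v : N.V} (h : N.Desc u v) : ∃ l, N.IsPathFromTo l u v := by
  induction h with
  | refl => exact ⟨[u], by simp [IsPathFromTo]; exact List.isChain_singleton _⟩
  | @tail b c hab hbc ih =>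
    obtain ⟨l, hl⟩ := ih
    have hne : l ≠ [] := path_ne_nil hl
    refine ⟨l ++ [c], ?_, ?_, ?_⟩
    · refine List.isChain_append.mpr ?_
      refine ⟨hl.1, List.isChain_singleton _, ?_⟩
      intro x hx y hy
      rw [hl.2.2] at hx
      obtain rfl : b = x := by simpa using hx
      obtain rfl : c = y := by simpa using hy
      exact hbc
    · rw [List.head?_append_of_ne_nil _ hne]; exact hl.2.1
    · simp

lemma path_concat {l1 l2 : List N.V} {u v w : N.V}
    (h1 : N.IsPathFromTo l1 u v) (h2 : N.IsPathFromTo l2 v w) :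
    N.IsPathFromTo (l1 ++ l2.tail) u w ∧ ∀ z ∈ l1 ++ l2.tail, z ∈ l1 ∨ z ∈ l2 := by
  have hne1 : l1 ≠ [] := path_ne_nil h1
  have hne2 : l2 ≠ [] := path_ne_nil h2
  obtain ⟨a2, t2, rfl⟩ := List.exists_cons_of_ne_nil hne2
  have ha2 : a2 = v := by simpa using h2.2.1
  constructor
  · refine ⟨?_, ?_, ?_⟩
    · refine List.isChain_append.mpr ?_
      refine ⟨h1.1, (List.isChain_cons.mp h2.1).2, ?_⟩
      intro x hx y hy
      rw [h1.2.2] at hx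
      obtain rfl : v = x := by simpa using hx
      rw [← ha2]
      exact (List.isChain_cons.mp h2.1).1 y hy
    · rw [List.head?_append_of_ne_nil _ hne1]; exact h1.2.1
    · show (l1 ++ t2).getLast? = some w
      match t2, h2 with
      | [], h2 =>
        have hvw : a2 = w := by simpa using h2.2.2
        rw [List.append_nil, h1.2.2, ← ha2, hvw]
      | b2 :: t2', h2 =>
        rw [List.getLast?_append_of_ne_nil _ (by simp : (b2 :: t2' : List N.V) ≠ [])]
        simpa using h2.2.2
  · intro z hz
    rcases List.mem_append.mp hz with h | h
    · exact Or.inl h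
    · exact Or.inr (List.mem_cons_of_mem _ h)

lemma chain'_nodup (hacy : N.Acyclic) : ∀ {l : List N.V}, l.Chain' N.arc → l.Nodup
  | [], _ => List.nodup_nil
  | a :: t, hc => by
    rw [List.nodup_cons]
    have hc' := List.isChain_cons.mp hc
    refine ⟨?_, chain'_nodup hacy hc'.2⟩
    intro ha
    match t, ha, hc' with
    | b :: t', ha, hc' =>
      exact hacy a (Relation.TransGen.head' (hc'.1 b rfl) (chain'_head_rtg hc'.2 rfl ha))

lemma desc_antisymm (hacy : N.Acyclic) {u v : N.V} (h1 : N.Desc u v) (h2 : N.Desc v u) :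
    u = v := by
  rcases Relation.reflTransGen_iff_eq_or_transGen.mp h1 with rfl | h1'
  · rfl
  · rcases Relation.reflTransGen_iff_eq_or_transGen.mp h2 with rfl | h2'
    · rfl
    · exact absurd (h1'.trans h2') (hacy u)

lemma path_split (hacy : N.Acyclic) {l : List N.V} {u w v : N.V}
    (h : N.IsPathFromTo l u w) (hv : v ∈ l) :
    ∃ l1 l2, N.IsPathFromTo l1 u v ∧ N.IsPathFromTo l2 v w ∧
      (∀ z ∈ l1, z ∈ l) ∧ (∀ z ∈ l2, z ∈ l) ∧ (∀ z, z ∈ l1 → z ∈ l2 → z = v) := by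
  obtain ⟨s, t, rfl⟩ := List.append_of_mem hv
  have hnd := chain'_nodup hacy h.1
  have hch := List.isChain_append.mp h.1
  refine ⟨s ++ [v], v :: t, ⟨?_, ?_, ?_⟩, ⟨hch.2.1, rfl, ?_⟩, ?_, ?_, ?_⟩
  · refine List.isChain_append.mpr ?_
    refine ⟨hch.1, List.isChain_singleton _, ?_⟩
    intro x hx y hy
    obtain rfl : v = y := by simpa using hy
    exact hch.2.2 x hx v rfl
  · match s, h with
    | [], h => simpa using h.2.1
    | a :: s', h =>
      rw [List.head?_append_of_ne_nil _ (by simp)]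
      have := h.2.1
      simpa using this
  · simp
  · rw [← List.getLast?_append_of_ne_nil s (by simp : (v :: t : List N.V) ≠ [])]
    exact h.2.2
  · intro z hz
    rcases List.mem_append.mp hz with h' | h'
    · exact List.mem_append_left _ h'
    · obtain rfl : z = v := by simpa using h'
      simp
  · intro z hz
    exact List.mem_append_right _ hz
  · intro z hz1 hz2
    rcases List.mem_append.mp hz1 with h' | h'
    · exact absurd rfl ((List.nodup_append.mp hnd).2.2 _ h' _ hz2)
    · simpa using h'

lemma pred_of_mem : ∀ {l : List N.V} {u v : N.V}, l.Chain' N.arc → l.head? = some u →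
    v ∈ l → v ≠ u → ∃ z ∈ l, N.arc z v
  | a :: t, u, v, hc, hh, hv, hne => by
    obtain rfl : a = u := by simpa using hh
    rcases List.mem_cons.mp hv with rfl | hv
    · exact absurd rfl hne
    · match t, hv with
      | b :: t', hv =>
        have hc' := List.isChain_cons_cons.mp hc
        by_cases hvb : v = b
        · subst hvb; exact ⟨a, by simp, hc'.1⟩
        · have hv' : v ∈ b :: t' := hv
          obtain ⟨z, hz, hzv⟩ := pred_of_mem hc'.2 rfl hv' hvb
          exact ⟨z, List.mem_cons_of_mem _ hz, hzv⟩

end Network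
/-- Lemma (iv): for a reticulated cherry `{a,b}` with reticulation leaf `b` in
a binary normal network `N`, with `g_b` the grandparent of `b` other than the
parent `p_a` of `a`: for all `c ∈ V_{g_b}` and `x ∈ X - (V_{g_b} ∪ {a,b})`,
`N` displays `cx|a` if and only if `N` displays `bx|a`. -/
theorem vgb_property_iv {X : Type} (N : Network X)
    (h : N.IsBinaryPhylo) (hn : N.IsNormal) (a b : X) (hab : a ≠ b)
    (pa pb gb : N.V)
    (hpa : N.arc pa (N.leaf a)) (hpb : N.arc pb (N.leaf b))
    (hretic : N.IsRetic pb) (hpapb : N.arc pa pb) (hgbpb : N.arc gb pb)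
    (hgbpa : gb ≠ pa) :
    ∀ c ∈ N.visSet gb, ∀ x : X, x ∉ N.visSet gb → x ≠ a → x ≠ b →
      (N.Displays c x a ↔ N.Displays b x a) := by
  classical
  open Network Relation in
  have hW : N.Wf := by
    rcases h with hW | hD
    · exact hW
    · exact absurd hpa (hD.2.1 _ _)
  obtain ⟨hfin, hacy, hrin, hrout, hinj, hleafdeg, hclass⟩ := hW
  haveI : Finite N.V := hfin
  have hdasym : ∀ {u v : N.V}, N.Desc u v → N.Desc v u → u = v :=
    fun h1 h2 => Network.desc_antisymm hacy h1 h2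
  have hnochild : ∀ (z : X) (w : N.V), ¬ N.arc (N.leaf z) w := by
    intro z w hw
    have h0 : N.children (N.leaf z) = ∅ :=
      (Set.ncard_eq_zero (Set.toFinite _)).mp (hleafdeg z).2
    exact absurd (show w ∈ N.children (N.leaf z) from hw) (by simp [h0])
  have hdleaf : ∀ {z : X} {w : N.V}, N.Desc (N.leaf z) w → w = N.leaf z := by
    intro z w hd
    rcases Relation.reflTransGen_iff_eq_or_transGen.mp hd with rfl | h'
    · rfl
    · obtain ⟨y, hy, -⟩ := Relation.TransGen.head'_iff.mp h'
      exact absurd hy (hnochild _ _)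
  have hparents1 : ∀ (z : X) {w : N.V}, N.arc w (N.leaf z) → N.parents (N.leaf z) = {w} := by
    intro z w hw
    obtain ⟨y, hy⟩ := Set.ncard_eq_one.mp (hleafdeg z).1
    have hwy : w = y := by
      have := hy ▸ (show w ∈ N.parents (N.leaf z) from hw)
      simpa using this
    rw [hy, hwy]
  have hpbpar : N.parents pb = {pa, gb} := by
    refine (Set.eq_of_subset_of_ncard_le ?_ ?_ (Set.toFinite _)).symm
    · rintro z (rfl | rfl)
      · exact hpapb
      · exact hgbpb
    · rw [hretic.1, Set.ncard_pair (Ne.symm hgbpa)]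
  have hpbchild : N.children pb = {N.leaf b} := by
    obtain ⟨y, hy⟩ := Set.ncard_eq_one.mp hretic.2
    have : N.leaf b = y := by
      have := hy ▸ (show N.leaf b ∈ N.children pb from hpb)
      simpa using this
    rw [hy, this]
  have hdpb : ∀ {w : N.V}, N.Desc pb w → w = pb ∨ w = N.leaf b := by
    intro w hd
    rcases Relation.reflTransGen_iff_eq_or_transGen.mp hd with rfl | h'
    · exact Or.inl rfl
    · obtain ⟨y, hy, hyd⟩ := Relation.TransGen.head'_iff.mp h'
      have : y = N.leaf b := by
        have := hpbchild ▸ (show y ∈ N.children pb from hy)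
        simpa using this
      subst this
      exact Or.inr (hdleaf hyd)
  have hleafne : ∀ z : X, N.leaf z ≠ pb := by
    intro z hz
    have h1 := (hleafdeg z).1
    rw [hz, hretic.1] at h1
    omega
  have hwfd : WellFounded (Relation.TransGen N.arc) := by
    haveI : IsTrans N.V (Relation.TransGen N.arc) := ⟨fun _ _ _ h1 h2 => h1.trans h2⟩
    haveI : IsIrrefl N.V (Relation.TransGen N.arc) := ⟨hacy⟩
    exact Finite.wellFounded_of_trans_of_irrefl _
  have hroot : ∀ v : N.V, N.Desc N.root v := by
    intro v
    induction v using hwfd.induction with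
    | _ v ih =>
      by_cases hv : v = N.root
      · subst hv; exact .refl
      · have hpar : (N.parents v).Nonempty := by
          apply Set.nonempty_of_ncard_ne_zero
          rcases hclass v with rfl | ⟨z, rfl⟩ | ht | hr
          · exact absurd rfl hv
          · rw [(hleafdeg z).1]; omega
          · rw [ht.1]; omega
          · rw [hr.1]; omega
        obtain ⟨u, hu⟩ := hpar
        exact (ih u (Relation.TransGen.single hu)).tail hu
  have hgbpa' : ¬ N.Desc gb pa := by
    intro hd
    rcases Relation.reflTransGen_iff_eq_or_transGen.mp hd with h' | h'
    · exact hgbpa h'.symm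
    · obtain ⟨w, hw, hwd⟩ := Relation.TransGen.head'_iff.mp h'
      have hwne : w ≠ pb := by
        intro he
        rw [he] at hwd
        rcases hdpb hwd with h2 | h2
        · exact hacy pb (Relation.TransGen.single (h2 ▸ hpapb))
        · exact hnochild b pb (h2 ▸ hpapb)
      exact hn.2 ⟨gb, pb, hgbpb, hretic, w, hw, hwne, hwd.tail hpapb⟩
  have hgbla : ¬ N.Desc gb (N.leaf a) := by
    intro hd
    rcases Relation.reflTransGen_iff_eq_or_transGen.mp hd with h' | h'
    · exact hnochild a pb (h' ▸ hgbpb)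
    · obtain ⟨w, hwd, hw⟩ := Relation.TransGen.tail'_iff.mp h'
      have hwpa : w = pa := by
        have := (hparents1 a hpa) ▸ (show w ∈ N.parents (N.leaf a) from hw)
        simpa using this
      exact hgbpa' (hwpa ▸ hwd)
  have hvisdesc : ∀ {z : X}, z ∈ N.visSet gb → ∃ l, N.IsPathFromTo l gb (N.leaf z) := by
    intro z hz
    obtain ⟨l, hl⟩ := Network.path_of_desc (hroot (N.leaf z))
    obtain ⟨l1, l2, h1, h2, -, -, -⟩ := Network.path_split hacy hl (hz l hl)
    exact ⟨l2, h2⟩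
  have hanv : a ∉ N.visSet gb := fun hv => by
    obtain ⟨l, hl⟩ := hvisdesc hv
    exact hgbla (Network.path_desc hl)
  have hbnv : b ∉ N.visSet gb := by
    intro hv
    obtain ⟨r0, hr0⟩ := Network.path_of_desc (hroot pa)
    have hp2 : N.IsPathFromTo [pa, pb, N.leaf b] pa (N.leaf b) := by
      refine ⟨?_, rfl, by simp⟩
      exact List.isChain_cons_cons.mpr ⟨hpapb, List.isChain_cons_cons.mpr ⟨hpb, List.isChain_singleton _⟩⟩
    obtain ⟨hpath, hmem⟩ := Network.path_concat hr0 hp2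
    rcases hmem gb (hv _ hpath) with h1 | h1
    · exact hgbpa' (Network.path_desc_last hr0 h1)
    · rcases (by simpa using h1 : gb = pa ∨ gb = pb ∨ gb = N.leaf b) with h2 | h2 | h2
      · exact hgbpa h2
      · exact hacy pb (Relation.TransGen.single (h2 ▸ hgbpb))
      · exact hnochild b pb (h2 ▸ hgbpb)
  intro c hc x hx hxa hxb
  have hcb : c ≠ b := fun e => hbnv (e ▸ hc)
  have hca : c ≠ a := fun e => hanv (e ▸ hc)
  have hcx : c ≠ x := fun e => hx (e ▸ hc)
  constructor
  · rintro ⟨-, -, hxa', p, q, l0, lc, ly, lz, hpq, hP0, hPx, hPy, hPz, hXY, hOXY, hZ⟩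
    have hpbly : pb ∉ ly := by
      intro hm
      rcases hdpb (Network.path_desc_last hPy hm) with h1 | h1
      · exact hleafne x h1
      · exact hxb (hinj h1)
    have hlbly : N.leaf b ∉ ly := fun hm => hxb (hinj (hdleaf (Network.path_desc_last hPy hm)))
    have hqlb : q ≠ N.leaf b := by
      intro he
      exact hcb (hinj (hdleaf (he ▸ Network.path_desc hPx)))
    have hqpb : q ≠ pb := by
      intro he
      rcases hdpb (he ▸ Network.path_desc hPx) with h1 | h1
      · exact hleafne c h1
      · exact hcb (hinj h1)
    have hpbl0 : pb ∉ l0 := by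
      intro hm
      rcases hdpb (Network.path_desc_last hP0 hm) with h1 | h1
      · exact hqpb h1
      · exact hqlb h1
    have hlbl0 : N.leaf b ∉ l0 := fun hm => hqlb (hdleaf (Network.path_desc_last hP0 hm))
    have hpblz : pb ∉ lz := by
      intro hm
      rcases hdpb (Network.path_desc_last hPz hm) with h1 | h1
      · exact hleafne a h1
      · exact hab (hinj h1)
    have hlblz : N.leaf b ∉ lz := fun hm => hab (hinj (hdleaf (Network.path_desc_last hPz hm)))
    have hgblz : gb ∉ lz := fun hm => hgbla (Network.path_desc_last hPz hm)
    have hp2 : N.IsPathFromTo [gb, pb, N.leaf b] gb (N.leaf b) := by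
      refine ⟨?_, rfl, by simp⟩
      exact List.isChain_cons_cons.mpr ⟨hgbpb, List.isChain_cons_cons.mpr ⟨hpb, List.isChain_singleton _⟩⟩
    obtain ⟨r0, hr0⟩ := Network.path_of_desc (hroot p)
    obtain ⟨h01, h01m⟩ := Network.path_concat hr0 hP0
    obtain ⟨hF, hFm⟩ := Network.path_concat h01 hPx
    rcases hFm gb (hc _ hF) with h1 | h1
    · rcases h01m gb h1 with h2 | h2
      · exact absurd ((Network.path_desc_last hr0 h2).trans (Network.path_desc hPz)) hgbla
      · -- CASE B : gb ∈ l0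
        obtain ⟨m1, m2, hm1, hm2, hm1s, hm2s, hmd⟩ := Network.path_split hacy hP0 h2
        obtain ⟨hly', hly'm⟩ := Network.path_concat hm2 hPy
        have hpgb : p ≠ gb := fun e => hgblz (e ▸ Network.path_head_mem hPz)
        have hqm2 : q ∈ m2 := Network.path_last_mem hm2
        refine ⟨fun e => hxb e.symm, fun e => hab e.symm, hxa',
          p, gb, m1, _, _, lz, hpgb, hm1, hp2, hly', hPz, ?_, ?_, ?_⟩
        · intro v hv hvy
          rcases (by simpa using hv : v = gb ∨ v = pb ∨ v = N.leaf b) with rfl | rfl | rfl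
          · rfl
          · rcases hly'm _ hvy with h3 | h3
            · exact absurd (hm2s _ h3) hpbl0
            · exact absurd h3 hpbly
          · rcases hly'm _ hvy with h3 | h3
            · exact absurd (hm2s _ h3) hlbl0
            · exact absurd h3 hlbly
        · intro v hv hvor
          rcases hvor with h3 | h3
          · rcases (by simpa using h3 : v = gb ∨ v = pb ∨ v = N.leaf b) with rfl | rfl | rfl
            · rfl
            · exact absurd (hm1s _ hv) hpbl0
            · exact absurd (hm1s _ hv) hlbl0
          · rcases hly'm _ h3 with h4 | h4
            · exact hmd _ hv h4
            · have hvq : v = q := hOXY v (hm1s _ hv) (Or.inr h4)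
              exact hvq.trans (hmd _ (hvq ▸ hv) hqm2)
        · intro v hv hvor
          rcases hvor with h3 | h3 | h3
          · exact hZ v hv (Or.inl (hm1s _ h3))
          · rcases (by simpa using h3 : v = gb ∨ v = pb ∨ v = N.leaf b) with rfl | rfl | rfl
            · exact absurd hv hgblz
            · exact absurd hv hpblz
            · exact absurd hv hlblz
          · rcases hly'm _ h3 with h4 | h4
            · exact hZ v hv (Or.inl (hm2s _ h4))
            · exact hZ v hv (Or.inr (Or.inr h4))
    · -- CASE A : gb ∈ lc
      obtain ⟨k1, k2, hk1, hk2, hk1s, hk2s, hkd⟩ := Network.path_split hacy hPx h1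
      obtain ⟨hlb, hlbm⟩ := Network.path_concat hk1 hp2
      refine ⟨fun e => hxb e.symm, fun e => hab e.symm, hxa',
        p, q, l0, _, ly, lz, hpq, hP0, hlb, hPy, hPz, ?_, ?_, ?_⟩
      · intro v hv hvy
        rcases hlbm _ hv with h3 | h3
        · exact hXY v (hk1s _ h3) hvy
        · rcases (by simpa using h3 : v = gb ∨ v = pb ∨ v = N.leaf b) with rfl | rfl | rfl
          · exact hXY _ h1 hvy
          · exact absurd hvy hpbly
          · exact absurd hvy hlbly
      · intro v hv hvor
        rcases hvor with h3 | h3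
        · rcases hlbm _ h3 with h4 | h4
          · exact hOXY v hv (Or.inl (hk1s _ h4))
          · rcases (by simpa using h4 : v = gb ∨ v = pb ∨ v = N.leaf b) with rfl | rfl | rfl
            · exact hOXY _ hv (Or.inl h1)
            · exact absurd hv hpbl0
            · exact absurd hv hlbl0
        · exact hOXY v hv (Or.inr h3)
      · intro v hv hvor
        rcases hvor with h3 | h3 | h3
        · exact hZ v hv (Or.inl h3)
        · rcases hlbm _ h3 with h4 | h4
          · exact hZ v hv (Or.inr (Or.inl (hk1s _ h4)))
          · rcases (by simpa using h4 : v = gb ∨ v = pb ∨ v = N.leaf b) with rfl | rfl | rfl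
            · exact absurd hv hgblz
            · exact absurd hv hpblz
            · exact absurd hv hlblz
        · exact hZ v hv (Or.inr (Or.inr h3))
  · rintro ⟨-, -, hxa', p, q, l0, lx, ly, lz, hpq, hP0, hPx, hPy, hPz, hXY, hOXY, hZ⟩
    have hqlb : q ≠ N.leaf b := by
      intro he
      exact hxb (hinj (hdleaf (he ▸ Network.path_desc hPy)))
    obtain ⟨z1, hz1m, hz1⟩ :=
      Network.pred_of_mem hPx.1 hPx.2.1 (Network.path_last_mem hPx) (Ne.symm hqlb)
    have hz1pb : z1 = pb := by
      have := (hparents1 b hpb) ▸ (show z1 ∈ N.parents (N.leaf b) from hz1)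
      simpa using this
    rw [hz1pb] at hz1m
    have hqpb : q ≠ pb := by
      intro he
      rcases hdpb (he ▸ Network.path_desc hPy) with h1 | h1
      · exact hleafne x h1
      · exact hxb (hinj h1)
    obtain ⟨w, hwm, hw⟩ := Network.pred_of_mem hPx.1 hPx.2.1 hz1m (Ne.symm hqpb)
    have hwor : w = pa ∨ w = gb := by
      have := hpbpar ▸ (show w ∈ N.parents pb from hw)
      simpa using this
    have hgbx : gb ∈ lx := by
      rcases hwor with hwpa | hwgb
      · exfalso
        rw [hwpa] at hwm
        have hpla : p ≠ N.leaf a := by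
          intro he
          exact hpq (he.trans (hdleaf (he ▸ Network.path_desc hP0)).symm)
        obtain ⟨z2, hz2m, hz2⟩ :=
          Network.pred_of_mem hPz.1 hPz.2.1 (Network.path_last_mem hPz) (Ne.symm hpla)
        have hz2pa : z2 = pa := by
          have := (hparents1 a hpa) ▸ (show z2 ∈ N.parents (N.leaf a) from hz2)
          simpa using this
        rw [hz2pa] at hz2m
        have hwp : pa = p := hZ pa hz2m (Or.inr (Or.inl hwm))
        have hd2 : N.Desc q p := by rw [← hwp]; exact Network.path_desc_head hPx hwm
        exact hpq (hdasym (Network.path_desc hP0) hd2)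
      · exact hwgb ▸ hwm
    obtain ⟨k1, k2, hk1, hk2, hk1s, hk2s, hkd⟩ := Network.path_split hacy hPx hgbx
    obtain ⟨P, hPP⟩ := hvisdesc hc
    obtain ⟨a0, t0, rfl⟩ := List.exists_cons_of_ne_nil (Network.path_ne_nil hPP)
    have ha0 : a0 = gb := by simpa using hPP.2.1
    subst ha0
    have hgbt0 : a0 ∉ t0 := (List.nodup_cons.mp (Network.chain'_nodup hacy hPP.1)).1
    have hdescqgb : N.Desc q a0 := Network.path_desc_head hPx hgbx
    have hlz_P : ∀ z ∈ lz, z ∉ (a0 :: t0) := by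
      intro z hzlz hzP
      exact hgbla ((Network.path_desc_head hPP hzP).trans (Network.path_desc_last hPz hzlz))
    by_cases hcap : ∃ z ∈ t0, z ∈ ly
    · obtain ⟨s, v, t, hsplit, hvly, htly⟩ := Network.exists_last_sat hcap
      have hPeq : a0 :: t0 = (a0 :: s) ++ (v :: t) := by rw [hsplit]; rfl
      have hvP : v ∈ a0 :: t0 := by rw [hPeq]; exact List.mem_append_right _ (by simp)
      have hlcchain : (v :: t).Chain' N.arc := by
        have := hPP.1; rw [hPeq] at this; exact (List.isChain_append.mp this).2.1
      have hlclast : (v :: t).getLast? = some (N.leaf c) := by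
        have := hPP.2.2
        rw [hPeq, List.getLast?_append_of_ne_nil _ (by simp : (v :: t : List N.V) ≠ [])] at this
        exact this
      have hlcP : N.IsPathFromTo (v :: t) v (N.leaf c) := ⟨hlcchain, rfl, hlclast⟩
      have hvt0 : v ∈ t0 := by rw [hsplit]; simp
      have hvneq : v ≠ q := by
        intro he
        have h1 : N.Desc v a0 := by rw [he]; exact hdescqgb
        have h2 : N.Desc a0 v := Network.path_desc_head hPP hvP
        exact hgbt0 ((hdasym h1 h2) ▸ hvt0)
      obtain ⟨y1, y2, hy1, hy2, hy1s, hy2s, hyd⟩ := Network.path_split hacy hPy hvly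
      obtain ⟨h0', h0'm⟩ := Network.path_concat hP0 hy1
      have hdescqv : N.Desc q v := hdescqgb.trans (Network.path_desc_head hPP hvP)
      have hpv : p ≠ v := by
        intro he
        have h2 : N.Desc q p := by rw [he]; exact hdescqv
        exact hpq (hdasym (Network.path_desc hP0) h2)
      refine ⟨hcx, hca, hxa', p, v, _, _, _, lz, hpv, h0', hlcP, hy2, hPz, ?_, ?_, ?_⟩
      · intro z hz hzy
        rcases List.mem_cons.mp hz with rfl | hz'
        · rfl
        · exact absurd (hy2s _ hzy) (htly _ hz')
      · intro z hz hzor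
        rcases h0'm _ hz with h3 | h3
        · rcases hzor with h4 | h4
          · have hd1 : N.Desc v z := Network.path_desc_head hlcP h4
            have hd2 : N.Desc z v := (Network.path_desc_last hP0 h3).trans hdescqv
            exact hdasym hd2 hd1
          · have hzq : z = q := hOXY z h3 (Or.inr (hy2s _ h4))
            exact absurd (hyd q (Network.path_head_mem hy1) (hzq ▸ h4)).symm hvneq
        · rcases hzor with h4 | h4
          · exact hdasym (Network.path_desc_last hy1 h3) (Network.path_desc_head hlcP h4)
          · exact hyd z h3 h4
      · intro z hz hzor
        rcases hzor with h3 | h3 | h3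
        · rcases h0'm _ h3 with h4 | h4
          · exact hZ z hz (Or.inl h4)
          · exact hZ z hz (Or.inr (Or.inr (hy1s _ h4)))
        · exact absurd (show z ∈ a0 :: t0 from by
            rw [hPeq]; exact List.mem_append_right _ h3) (hlz_P z hz)
        · exact hZ z hz (Or.inr (Or.inr (hy2s _ h3)))
    · push_neg at hcap
      obtain ⟨hlx', hlx'm⟩ := Network.path_concat hk1 hPP
      refine ⟨hcx, hca, hxa', p, q, l0, _, ly, lz, hpq, hP0, hlx', hPy, hPz, ?_, ?_, ?_⟩
      · intro z hz hzy
        rcases hlx'm _ hz with h3 | h3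
        · exact hXY z (hk1s _ h3) hzy
        · rcases List.mem_cons.mp h3 with rfl | h4
          · exact hXY _ hgbx hzy
          · exact absurd hzy (hcap _ h4)
      · intro z hz hzor
        rcases hzor with h3 | h3
        · rcases hlx'm _ h3 with h4 | h4
          · exact hOXY z hz (Or.inl (hk1s _ h4))
          · have hd1 : N.Desc a0 z := Network.path_desc_head hPP h4
            have hd2 : N.Desc z q := Network.path_desc_last hP0 hz
            have hzgb : z = a0 := (hdasym hd1 (hd2.trans hdescqgb)).symm
            exact hzgb.trans (hdasym hdescqgb (hzgb ▸ hd2)).symm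
        · exact hOXY z hz (Or.inr h3)
      · intro z hz hzor
        rcases hzor with h3 | h3 | h3
        · exact hZ z hz (Or.inl h3)
        · rcases hlx'm _ h3 with h4 | h4
          · exact hZ z hz (Or.inr (Or.inl (hk1s _ h4)))
          · exact absurd h4 (hlz_P z hz)
        · exact hZ z hz (Or.inr (Or.inr h3))
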